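/- Suppose ε = 0 and let {Uⁿ}_{n=0}^N be a CNFD solution. Then the CNFD scheme conserves both the discrete mass and the discrete energy: ‖Uⁿ‖²_{2,h} = ‖U⁰‖²_{2,h} and E_h(Uⁿ) = E_h(U⁰) for every n = 0, 1, …, N. -/

import Mathlib

noncomputable section

open Finset Complex ComplexConjugate

/-- Membership in the space `X_JK`: complex arrays vanishing on the boundary of the grid. -/
def memX (J K : ℕ) (u : ℕ → ℕ → ℂ) : Prop :=
  (∀ k, u 0 k = 0) ∧ (∀ k, u J k = 0) ∧ (∀ j, u j 0 = 0) ∧ (∀ j, u j K = 0)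

/-- `normP Δx Δy J K p u = ‖u‖_{p,h}^p`. -/
def normP (Δx Δy : ℝ) (J K : ℕ) (p : ℕ) (u : ℕ → ℕ → ℂ) : ℝ :=
  Δx * Δy * ∑ j ∈ range J, ∑ k ∈ range K, ‖u j k‖ ^ p

/-- `gradSq Δx Δy J K u = ‖δ⁺u‖²_{2,h}`. -/
def gradSq (Δx Δy : ℝ) (J K : ℕ) (u : ℕ → ℕ → ℂ) : ℝ :=
  Δx * Δy * ∑ j ∈ range J, ∑ k ∈ range K,
    (‖(u (j + 1) k - u j k) / (Δx : ℂ)‖ ^ 2 +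
      ‖(u j (k + 1) - u j k) / (Δy : ℂ)‖ ^ 2)

/-- The discrete energy `E_h(u)`. -/
def energy (Δx Δy : ℝ) (J K : ℕ) (lam ν : ℝ) (u : ℕ → ℕ → ℂ) : ℝ :=
  gradSq Δx Δy J K u - lam / 2 * normP Δx Δy J K 4 u + ν / 3 * normP Δx Δy J K 6 u

/-- The discrete Laplacian `δ² = δ²_x + δ²_y` (at interior indices). -/
def delta2 (Δx Δy : ℝ) (u : ℕ → ℕ → ℂ) (j k : ℕ) : ℂ :=
  (u (j + 1) k - 2 * u j k + u (j - 1) k) / (Δx : ℂ) ^ 2 +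
    (u j (k + 1) - 2 * u j k + u j (k - 1)) / (Δy : ℂ) ^ 2

/-- `ψ₁(z,w) = ((|z|² + |w|²)/2)·((z+w)/2)`. -/
def psi1 (z w : ℂ) : ℂ :=
  (((‖z‖ ^ 2 + ‖w‖ ^ 2) / 2 : ℝ) : ℂ) * ((z + w) / 2)

/-- `ψ₂(z,w) = ((|z|⁴ + |z|²|w|² + |w|⁴)/3)·((z+w)/2)`. -/
def psi2 (z w : ℂ) : ℂ :=
  (((‖z‖ ^ 4 + ‖z‖ ^ 2 * ‖w‖ ^ 2 + ‖w‖ ^ 4) / 3 : ℝ) : ℂ) *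
    ((z + w) / 2)

/-- `φ(z,w) = |(z+w)/2|²·((z+w)/2)`. -/
def phi (z w : ℂ) : ℂ :=
  ((‖(z + w) / 2‖ ^ 2 : ℝ) : ℂ) * ((z + w) / 2)

/-- One Crank–Nicolson step equation: `W` is the next level, `V` the current one. -/
def stepEq (Δx Δy : ℝ) (J K : ℕ) (lam ν ε τ : ℝ) (W V : ℕ → ℕ → ℂ) : Prop :=
  ∀ j k : ℕ, 1 ≤ j → j ≤ J - 1 → 1 ≤ k → k ≤ K - 1 →
    Complex.I * (W j k - V j k) / (τ : ℂ) +
      delta2 Δx Δy (fun j' k' => (W j' k' + V j' k') / 2) j k +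
      (lam : ℂ) * psi1 (W j k) (V j k) - (ν : ℂ) * psi2 (W j k) (V j k) +
      Complex.I * (ε : ℂ) * phi (W j k) (V j k) = 0

/-- A CNFD solution `U⁰, …, U^N`. -/
def isCNFD (Δx Δy : ℝ) (J K : ℕ) (lam ν ε τ : ℝ) (N : ℕ) (U : ℕ → ℕ → ℕ → ℂ) : Prop :=
  (∀ n, n ≤ N → memX J K (U n)) ∧
    ∀ n, n < N → stepEq Δx Δy J K lam ν ε τ (U (n + 1)) (U n)

/-! ### Auxiliary pointwise lemmas -/

lemma aux_im1 (τ : ℝ) (hτ : τ ≠ 0) (z w : ℂ) :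
    (Complex.I * (z - w) / (τ:ℂ) * conj ((z+w)/2)).im
      = (Complex.normSq z - Complex.normSq w) / (2*τ) := by
  simp [Complex.div_re, Complex.div_im, Complex.mul_re, Complex.mul_im, Complex.normSq_apply]
  field_simp
  ring

lemma aux_re1 (τ : ℝ) (z w : ℂ) :
    (Complex.I * (z - w) / (τ:ℂ) * conj (z - w)).re = 0 := by
  simp [Complex.div_re, Complex.div_im, Complex.mul_re, Complex.mul_im, Complex.normSq_apply]
  ring

lemma aux_im2 (lam : ℝ) (z w : ℂ) :
    ((lam:ℂ) * psi1 z w * conj ((z+w)/2)).im = 0 := by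
  obtain ⟨r, hr⟩ : ∃ r : ℝ, psi1 z w = (r:ℂ) * ((z+w)/2) := ⟨_, rfl⟩
  rw [hr]
  simp [Complex.div_re, Complex.div_im, Complex.mul_re, Complex.mul_im]
  ring

lemma aux_im3 (ν : ℝ) (z w : ℂ) :
    ((ν:ℂ) * psi2 z w * conj ((z+w)/2)).im = 0 := by
  obtain ⟨r, hr⟩ : ∃ r : ℝ, psi2 z w = (r:ℂ) * ((z+w)/2) := ⟨_, rfl⟩
  rw [hr]
  simp [Complex.div_re, Complex.div_im, Complex.mul_re, Complex.mul_im]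
  ring

lemma aux_re2 (lam : ℝ) (z w : ℂ) :
    ((lam:ℂ) * psi1 z w * conj (z - w)).re
      = lam * (‖z‖ ^ 4 - ‖w‖ ^ 4) / 4 := by
  have hp : ‖z‖ ^ 2 = z.re^2 + z.im^2 := by
    rw [Complex.sq_norm, Complex.normSq_apply]; ring
  have hq : ‖w‖ ^ 2 = w.re^2 + w.im^2 := by
    rw [Complex.sq_norm, Complex.normSq_apply]; ring
  have h4z : ‖z‖ ^ 4 = (‖z‖ ^ 2)^2 := by ring
  have h4w : ‖w‖ ^ 4 = (‖w‖ ^ 2)^2 := by ring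
  rw [h4z, h4w, psi1, hp, hq]
  simp [Complex.div_re, Complex.div_im, Complex.mul_re, Complex.mul_im, ← Complex.ofReal_pow]
  ring

lemma aux_re3 (ν : ℝ) (z w : ℂ) :
    ((ν:ℂ) * psi2 z w * conj (z - w)).re
      = ν * (‖z‖ ^ 6 - ‖w‖ ^ 6) / 6 := by
  have hp : ‖z‖ ^ 2 = z.re^2 + z.im^2 := by
    rw [Complex.sq_norm, Complex.normSq_apply]; ring
  have hq : ‖w‖ ^ 2 = w.re^2 + w.im^2 := by
    rw [Complex.sq_norm, Complex.normSq_apply]; ring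
  have h6z : ‖z‖ ^ 6 = (‖z‖ ^ 2)^3 := by ring
  have h6w : ‖w‖ ^ 6 = (‖w‖ ^ 2)^3 := by ring
  have h4z : ‖z‖ ^ 4 = (‖z‖ ^ 2)^2 := by ring
  have h4w : ‖w‖ ^ 4 = (‖w‖ ^ 2)^2 := by ring
  rw [h6z, h6w, psi2, h4z, h4w, hp, hq]
  simp [Complex.div_re, Complex.div_im, Complex.mul_re, Complex.mul_im, ← Complex.ofReal_pow]
  ring

lemma aux_grad_re (a b : ℂ) :
    ((a + b)/2 * conj (a - b)).re = (Complex.normSq a - Complex.normSq b) / 2 := by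
  simp [Complex.div_re, Complex.div_im, Complex.mul_re, Complex.mul_im, Complex.normSq_apply]
  ring

lemma aux_grad_re' (zp z wp w : ℂ) :
    (((zp + wp)/2 - (z + w)/2) * conj ((zp - wp) - (z - w))).re
      = (Complex.normSq (zp - z) - Complex.normSq (wp - w)) / 2 := by
  have h1 : (zp + wp)/2 - (z + w)/2 = ((zp - z) + (wp - w))/2 := by ring
  have h2 : (zp - wp) - (z - w) = (zp - z) - (wp - w) := by ring
  rw [h1, h2, aux_grad_re]

/-! ### Summation by parts -/

lemma sbp1 (J : ℕ) (hJ : 2 ≤ J) (f g : ℕ → ℂ) (hg0 : g 0 = 0) (hgJ : g J = 0) :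
    ∑ j ∈ Finset.Ico 1 J, (f (j+1) - 2*f j + f (j-1)) * conj (g j)
      = -∑ j ∈ Finset.range J, (f (j+1) - f j) * conj (g (j+1) - g j) := by
  have e1 : ∀ j ∈ Finset.Ico 1 J, (f (j+1) - 2*f j + f (j-1)) * conj (g j)
      = (f (j+1) - f j) * conj (g j) - (f j - f (j-1)) * conj (g j) := by
    intro j _; ring
  rw [Finset.sum_congr rfl e1, Finset.sum_sub_distrib]
  have hA : ∑ j ∈ Finset.Ico 1 J, (f (j+1) - f j) * conj (g j)
      = ∑ j ∈ Finset.range J, (f (j+1) - f j) * conj (g j) := by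
    rw [Finset.range_eq_Ico, Finset.sum_eq_sum_Ico_succ_bot (by omega : 0 < J)]
    simp [hg0]
  have hB : ∑ j ∈ Finset.Ico 1 J, (f j - f (j-1)) * conj (g j)
      = ∑ j ∈ Finset.range J, (f (j+1) - f j) * conj (g (j+1)) := by
    rw [Finset.sum_Ico_eq_sum_range]
    conv_rhs => rw [show J = (J-1)+1 from by omega, Finset.sum_range_succ]
    rw [show (J-1)+1 = J from by omega, hgJ]
    simp only [map_zero, mul_zero, add_zero]
    apply Finset.sum_congr rfl
    intro i _
    rw [show 1 + i - 1 = i from by omega, show 1 + i = i + 1 from by omega]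
  rw [hA, hB, ← Finset.sum_sub_distrib, ← Finset.sum_neg_distrib]
  apply Finset.sum_congr rfl
  intro j _
  rw [map_sub]
  ring

lemma sbp2 (Δx Δy : ℝ) (J K : ℕ) (hJ : 2 ≤ J) (hK : 2 ≤ K) (u v : ℕ → ℕ → ℂ)
    (hu : memX J K u) (hv : memX J K v) :
    ∑ j ∈ Finset.Ico 1 J, ∑ k ∈ Finset.Ico 1 K, delta2 Δx Δy u j k * conj (v j k)
      = -(1/(Δx:ℂ)^2) * ∑ j ∈ Finset.range J, ∑ k ∈ Finset.range K,
            (u (j+1) k - u j k) * conj (v (j+1) k - v j k)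
        - (1/(Δy:ℂ)^2) * ∑ j ∈ Finset.range J, ∑ k ∈ Finset.range K,
            (u j (k+1) - u j k) * conj (v j (k+1) - v j k) := by
  obtain ⟨hu0, huJ, hu0', huK⟩ := hu
  obtain ⟨hv0, hvJ, hv0', hvK⟩ := hv
  have split : ∀ j ∈ Finset.Ico 1 J, ∀ k ∈ Finset.Ico 1 K,
      delta2 Δx Δy u j k * conj (v j k)
        = (1/(Δx:ℂ)^2) * ((u (j+1) k - 2*u j k + u (j-1) k) * conj (v j k))
          + (1/(Δy:ℂ)^2) * ((u j (k+1) - 2*u j k + u j (k-1)) * conj (v j k)) := by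
    intro j _ k _; rw [delta2]; ring
  calc
    ∑ j ∈ Finset.Ico 1 J, ∑ k ∈ Finset.Ico 1 K, delta2 Δx Δy u j k * conj (v j k)
      = ∑ j ∈ Finset.Ico 1 J, ((1/(Δx:ℂ)^2) * ∑ k ∈ Finset.Ico 1 K,
            ((u (j+1) k - 2*u j k + u (j-1) k) * conj (v j k))
          + (1/(Δy:ℂ)^2) * ∑ k ∈ Finset.Ico 1 K,
            ((u j (k+1) - 2*u j k + u j (k-1)) * conj (v j k))) := by
        refine Finset.sum_congr rfl fun j hj => ?_
        rw [Finset.sum_congr rfl (split j hj), Finset.sum_add_distrib,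
          ← Finset.mul_sum, ← Finset.mul_sum]
    _ = (1/(Δx:ℂ)^2) * ∑ j ∈ Finset.Ico 1 J, ∑ k ∈ Finset.Ico 1 K,
            ((u (j+1) k - 2*u j k + u (j-1) k) * conj (v j k))
        + (1/(Δy:ℂ)^2) * ∑ j ∈ Finset.Ico 1 J, ∑ k ∈ Finset.Ico 1 K,
            ((u j (k+1) - 2*u j k + u j (k-1)) * conj (v j k)) := by
        rw [Finset.sum_add_distrib, ← Finset.mul_sum, ← Finset.mul_sum]
    _ = -(1/(Δx:ℂ)^2) * ∑ j ∈ Finset.range J, ∑ k ∈ Finset.range K,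
            (u (j+1) k - u j k) * conj (v (j+1) k - v j k)
        - (1/(Δy:ℂ)^2) * ∑ j ∈ Finset.range J, ∑ k ∈ Finset.range K,
            (u j (k+1) - u j k) * conj (v j (k+1) - v j k) := by
        have hx : ∑ j ∈ Finset.Ico 1 J, ∑ k ∈ Finset.Ico 1 K,
              ((u (j+1) k - 2*u j k + u (j-1) k) * conj (v j k))
            = -∑ j ∈ Finset.range J, ∑ k ∈ Finset.range K,
              (u (j+1) k - u j k) * conj (v (j+1) k - v j k) := by
          rw [Finset.sum_comm]
          have step : ∀ k ∈ Finset.Ico 1 K,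
              ∑ j ∈ Finset.Ico 1 J, ((u (j+1) k - 2*u j k + u (j-1) k) * conj (v j k))
                = -∑ j ∈ Finset.range J, (u (j+1) k - u j k) * conj (v (j+1) k - v j k) :=
            fun k _ => sbp1 J hJ (fun j => u j k) (fun j => v j k) (hv0 k) (hvJ k)
          rw [Finset.sum_congr rfl step, Finset.sum_neg_distrib]
          rw [show (∑ k ∈ Finset.Ico 1 K, ∑ j ∈ Finset.range J,
                (u (j+1) k - u j k) * conj (v (j+1) k - v j k))
              = ∑ k ∈ Finset.range K, ∑ j ∈ Finset.range J,
                (u (j+1) k - u j k) * conj (v (j+1) k - v j k) from by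
            simp only [Finset.range_eq_Ico]
            rw [Finset.sum_eq_sum_Ico_succ_bot (by omega : 0 < K)]
            simp [hu0']]
          rw [Finset.sum_comm]
        have hy : ∑ j ∈ Finset.Ico 1 J, ∑ k ∈ Finset.Ico 1 K,
              ((u j (k+1) - 2*u j k + u j (k-1)) * conj (v j k))
            = -∑ j ∈ Finset.range J, ∑ k ∈ Finset.range K,
              (u j (k+1) - u j k) * conj (v j (k+1) - v j k) := by
          have step : ∀ j ∈ Finset.Ico 1 J,
              ∑ k ∈ Finset.Ico 1 K, ((u j (k+1) - 2*u j k + u j (k-1)) * conj (v j k))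
                = -∑ k ∈ Finset.range K, (u j (k+1) - u j k) * conj (v j (k+1) - v j k) :=
            fun j _ => sbp1 K hK (fun k => u j k) (fun k => v j k) (hv0' j) (hvK j)
          rw [Finset.sum_congr rfl step, Finset.sum_neg_distrib]
          rw [show (∑ j ∈ Finset.Ico 1 J, ∑ k ∈ Finset.range K,
                (u j (k+1) - u j k) * conj (v j (k+1) - v j k))
              = ∑ j ∈ Finset.range J, ∑ k ∈ Finset.range K,
                (u j (k+1) - u j k) * conj (v j (k+1) - v j k) from by
            simp only [Finset.range_eq_Ico]
            rw [Finset.sum_eq_sum_Ico_succ_bot (by omega : 0 < J)]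
            simp [hu0]]
        rw [hx, hy]
        ring

/-! ### Sum helpers -/

lemma dsum_helper (s1 s2 : Finset ℕ) (f g : ℕ → ℕ → ℝ) (c : ℝ) :
    ∑ j ∈ s1, ∑ k ∈ s2, (c * (f j k - g j k))
      = c * ((∑ j ∈ s1, ∑ k ∈ s2, f j k) - ∑ j ∈ s1, ∑ k ∈ s2, g j k) := by
  simp only [mul_sub, Finset.sum_sub_distrib, ← Finset.mul_sum]

lemma dsum_helper2 (s1 s2 : Finset ℕ) (f g : ℕ → ℕ → ℝ) (c d : ℝ) :
    ∑ j ∈ s1, ∑ k ∈ s2, (f j k * c + g j k * d)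
      = (∑ j ∈ s1, ∑ k ∈ s2, f j k) * c + (∑ j ∈ s1, ∑ k ∈ s2, g j k) * d := by
  simp only [Finset.sum_add_distrib, ← Finset.sum_mul]

lemma interior_sum (J K : ℕ) (hJ : 1 ≤ J) (hK : 1 ≤ K) (u : ℕ → ℕ → ℂ) (hu : memX J K u)
    (g : ℂ → ℝ) (hg : g 0 = 0) :
    ∑ j ∈ Finset.range J, ∑ k ∈ Finset.range K, g (u j k)
      = ∑ j ∈ Finset.Ico 1 J, ∑ k ∈ Finset.Ico 1 K, g (u j k) := by
  simp only [Finset.range_eq_Ico]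
  rw [Finset.sum_eq_sum_Ico_succ_bot hJ]
  rw [show (∑ k ∈ Finset.Ico 0 K, g (u 0 k)) = 0 from by simp [hu.1, hg], zero_add]
  refine Finset.sum_congr rfl fun j _ => ?_
  rw [Finset.sum_eq_sum_Ico_succ_bot hK,
    show g (u j 0) = 0 from by rw [hu.2.2.1 j, hg], zero_add]

/-! ### One-step conservation -/

lemma step_conserve (Δx Δy : ℝ) (hΔx : 0 < Δx) (hΔy : 0 < Δy) (J K : ℕ) (hJ : 2 ≤ J)
    (hK : 2 ≤ K) (lam ν τ : ℝ) (hτ : 0 < τ) (W V : ℕ → ℕ → ℂ)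
    (hWX : memX J K W) (hVX : memX J K V) (hst : stepEq Δx Δy J K lam ν 0 τ W V) :
    normP Δx Δy J K 2 W = normP Δx Δy J K 2 V ∧
      energy Δx Δy J K lam ν W = energy Δx Δy J K lam ν V := by
  have hE : ∀ j ∈ Finset.Ico 1 J, ∀ k ∈ Finset.Ico 1 K,
      Complex.I * (W j k - V j k) / (τ:ℂ)
        + delta2 Δx Δy (fun j' k' => (W j' k' + V j' k') / 2) j k
        + (lam:ℂ) * psi1 (W j k) (V j k) - (ν:ℂ) * psi2 (W j k) (V j k) = 0 := by
    intro j hj k hk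
    rw [Finset.mem_Ico] at hj hk
    have := hst j k hj.1 (by omega) hk.1 (by omega)
    simpa using this
  set S : ℕ → ℕ → ℂ := fun j' k' => (W j' k' + V j' k') / 2 with hSdef
  have hS : memX J K S := by
    refine ⟨fun k => ?_, fun k => ?_, fun j => ?_, fun j => ?_⟩ <;>
      simp [hSdef, hWX.1, hWX.2.1, hWX.2.2.1, hWX.2.2.2,
        hVX.1, hVX.2.1, hVX.2.2.1, hVX.2.2.2]
  set D : ℕ → ℕ → ℂ := fun j' k' => W j' k' - V j' k' with hDdef
  have hD : memX J K D := by
    refine ⟨fun k => ?_, fun k => ?_, fun j => ?_, fun j => ?_⟩ <;>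
      simp [hDdef, hWX.1, hWX.2.1, hWX.2.2.1, hWX.2.2.2,
        hVX.1, hVX.2.1, hVX.2.2.1, hVX.2.2.2]
  have h0 : ∀ t : ℕ → ℕ → ℂ,
      (∑ j ∈ Finset.Ico 1 J, ∑ k ∈ Finset.Ico 1 K,
          Complex.I * (W j k - V j k) / (τ:ℂ) * conj (t j k))
      + (∑ j ∈ Finset.Ico 1 J, ∑ k ∈ Finset.Ico 1 K, delta2 Δx Δy S j k * conj (t j k))
      + (∑ j ∈ Finset.Ico 1 J, ∑ k ∈ Finset.Ico 1 K,
          (lam:ℂ) * psi1 (W j k) (V j k) * conj (t j k))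
      - (∑ j ∈ Finset.Ico 1 J, ∑ k ∈ Finset.Ico 1 K,
          (ν:ℂ) * psi2 (W j k) (V j k) * conj (t j k)) = 0 := by
    intro t
    rw [← Finset.sum_add_distrib, ← Finset.sum_add_distrib, ← Finset.sum_sub_distrib]
    refine Finset.sum_eq_zero fun j hj => ?_
    rw [← Finset.sum_add_distrib, ← Finset.sum_add_distrib, ← Finset.sum_sub_distrib]
    refine Finset.sum_eq_zero fun k hk => ?_
    have h := hE j hj k hk
    linear_combination (conj (t j k)) * h
  have hc1 : (1/(Δx:ℂ)^2) = ((1/Δx^2 : ℝ) : ℂ) := by push_cast; ring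
  have hc2 : (1/(Δy:ℂ)^2) = ((1/Δy^2 : ℝ) : ℂ) := by push_cast; ring
  constructor
  · -- Mass conservation
    have hm := congrArg Complex.im (h0 S)
    simp only [Complex.add_im, Complex.sub_im, Complex.zero_im] at hm
    have hP2 : (∑ j ∈ Finset.Ico 1 J, ∑ k ∈ Finset.Ico 1 K,
        delta2 Δx Δy S j k * conj (S j k)).im = 0 := by
      rw [sbp2 Δx Δy J K hJ hK S S hS hS, hc1, hc2]
      have hx : (∑ j ∈ Finset.range J, ∑ k ∈ Finset.range K,
          (S (j+1) k - S j k) * conj (S (j+1) k - S j k)).im = 0 := by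
        simp only [Complex.im_sum]
        refine Finset.sum_eq_zero fun j _ => Finset.sum_eq_zero fun k _ => ?_
        rw [Complex.mul_conj]; simp
      have hy : (∑ j ∈ Finset.range J, ∑ k ∈ Finset.range K,
          (S j (k+1) - S j k) * conj (S j (k+1) - S j k)).im = 0 := by
        simp only [Complex.im_sum]
        refine Finset.sum_eq_zero fun j _ => Finset.sum_eq_zero fun k _ => ?_
        rw [Complex.mul_conj]; simp
      simp only [neg_mul, Complex.sub_im, Complex.neg_im, Complex.mul_im, Complex.ofReal_re,
        Complex.ofReal_im, hx, hy, mul_zero, zero_mul, add_zero, zero_add, neg_zero, sub_zero]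
    have hP3 : (∑ j ∈ Finset.Ico 1 J, ∑ k ∈ Finset.Ico 1 K,
        (lam:ℂ) * psi1 (W j k) (V j k) * conj (S j k)).im = 0 := by
      simp only [Complex.im_sum]
      exact Finset.sum_eq_zero fun j _ => Finset.sum_eq_zero fun k _ => aux_im2 lam _ _
    have hP4 : (∑ j ∈ Finset.Ico 1 J, ∑ k ∈ Finset.Ico 1 K,
        (ν:ℂ) * psi2 (W j k) (V j k) * conj (S j k)).im = 0 := by
      simp only [Complex.im_sum]
      exact Finset.sum_eq_zero fun j _ => Finset.sum_eq_zero fun k _ => aux_im3 ν _ _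
    have hP1 : (∑ j ∈ Finset.Ico 1 J, ∑ k ∈ Finset.Ico 1 K,
        Complex.I * (W j k - V j k) / (τ:ℂ) * conj (S j k)).im
        = (1/(2*τ)) * ((∑ j ∈ Finset.Ico 1 J, ∑ k ∈ Finset.Ico 1 K,
            Complex.normSq (W j k))
          - ∑ j ∈ Finset.Ico 1 J, ∑ k ∈ Finset.Ico 1 K, Complex.normSq (V j k)) := by
      simp only [Complex.im_sum]
      rw [← dsum_helper]
      refine Finset.sum_congr rfl fun j _ => Finset.sum_congr rfl fun k _ => ?_
      rw [show S j k = (W j k + V j k)/2 from rfl, aux_im1 τ hτ.ne' (W j k) (V j k)]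
      ring
    rw [hP1, hP2, hP3, hP4] at hm
    have hMM : (∑ j ∈ Finset.Ico 1 J, ∑ k ∈ Finset.Ico 1 K, Complex.normSq (W j k))
        = ∑ j ∈ Finset.Ico 1 J, ∑ k ∈ Finset.Ico 1 K, Complex.normSq (V j k) := by
      have h2τ : (1:ℝ)/(2*τ) ≠ 0 := by positivity
      have := mul_eq_zero.mp (by linarith [hm] :
        (1/(2*τ)) * ((∑ j ∈ Finset.Ico 1 J, ∑ k ∈ Finset.Ico 1 K, Complex.normSq (W j k))
          - ∑ j ∈ Finset.Ico 1 J, ∑ k ∈ Finset.Ico 1 K, Complex.normSq (V j k)) = 0)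
      rcases this with h | h
      · exact absurd h h2τ
      · linarith
    have hnorm : ∀ u : ℕ → ℕ → ℂ, memX J K u → normP Δx Δy J K 2 u
        = Δx * Δy * ∑ j ∈ Finset.Ico 1 J, ∑ k ∈ Finset.Ico 1 K, Complex.normSq (u j k) := by
      intro u hu
      rw [normP, interior_sum J K (by omega) (by omega) u hu (fun z => ‖z‖ ^ 2)
        (by simp)]
      congr 1
      exact Finset.sum_congr rfl fun j _ => Finset.sum_congr rfl fun k _ =>
        (Complex.sq_norm _)
    rw [hnorm W hWX, hnorm V hVX, hMM]
  · -- Energy conservation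
    have hm := congrArg Complex.re (h0 D)
    simp only [Complex.add_re, Complex.sub_re, Complex.zero_re] at hm
    have hP1 : (∑ j ∈ Finset.Ico 1 J, ∑ k ∈ Finset.Ico 1 K,
        Complex.I * (W j k - V j k) / (τ:ℂ) * conj (D j k)).re = 0 := by
      simp only [Complex.re_sum]
      exact Finset.sum_eq_zero fun j _ => Finset.sum_eq_zero fun k _ =>
        aux_re1 τ (W j k) (V j k)
    have hGx : (∑ j ∈ Finset.range J, ∑ k ∈ Finset.range K,
        (S (j+1) k - S j k) * conj (D (j+1) k - D j k)).re
        = (1/2) * ((∑ j ∈ Finset.range J, ∑ k ∈ Finset.range K,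
            Complex.normSq (W (j+1) k - W j k))
          - ∑ j ∈ Finset.range J, ∑ k ∈ Finset.range K,
            Complex.normSq (V (j+1) k - V j k)) := by
      simp only [Complex.re_sum]
      rw [← dsum_helper]
      refine Finset.sum_congr rfl fun j _ => Finset.sum_congr rfl fun k _ => ?_
      rw [show S (j+1) k = (W (j+1) k + V (j+1) k)/2 from rfl,
        show S j k = (W j k + V j k)/2 from rfl,
        show D (j+1) k = W (j+1) k - V (j+1) k from rfl,
        show D j k = W j k - V j k from rfl,
        aux_grad_re' (W (j+1) k) (W j k) (V (j+1) k) (V j k)]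
      ring
    have hGy : (∑ j ∈ Finset.range J, ∑ k ∈ Finset.range K,
        (S j (k+1) - S j k) * conj (D j (k+1) - D j k)).re
        = (1/2) * ((∑ j ∈ Finset.range J, ∑ k ∈ Finset.range K,
            Complex.normSq (W j (k+1) - W j k))
          - ∑ j ∈ Finset.range J, ∑ k ∈ Finset.range K,
            Complex.normSq (V j (k+1) - V j k)) := by
      simp only [Complex.re_sum]
      rw [← dsum_helper]
      refine Finset.sum_congr rfl fun j _ => Finset.sum_congr rfl fun k _ => ?_
      rw [show S j (k+1) = (W j (k+1) + V j (k+1))/2 from rfl,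
        show S j k = (W j k + V j k)/2 from rfl,
        show D j (k+1) = W j (k+1) - V j (k+1) from rfl,
        show D j k = W j k - V j k from rfl,
        aux_grad_re' (W j (k+1)) (W j k) (V j (k+1)) (V j k)]
      ring
    have hP2 : (∑ j ∈ Finset.Ico 1 J, ∑ k ∈ Finset.Ico 1 K,
        delta2 Δx Δy S j k * conj (D j k)).re
        = -((1/Δx^2) * ((1/2) * ((∑ j ∈ Finset.range J, ∑ k ∈ Finset.range K,
            Complex.normSq (W (j+1) k - W j k))
          - ∑ j ∈ Finset.range J, ∑ k ∈ Finset.range K,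
            Complex.normSq (V (j+1) k - V j k))))
        - (1/Δy^2) * ((1/2) * ((∑ j ∈ Finset.range J, ∑ k ∈ Finset.range K,
            Complex.normSq (W j (k+1) - W j k))
          - ∑ j ∈ Finset.range J, ∑ k ∈ Finset.range K,
            Complex.normSq (V j (k+1) - V j k))) := by
      rw [sbp2 Δx Δy J K hJ hK S D hS hD, hc1, hc2]
      simp only [neg_mul, Complex.sub_re, Complex.neg_re, Complex.mul_re, Complex.ofReal_re,
        Complex.ofReal_im, hGx, hGy, mul_zero, zero_mul, add_zero, zero_add, neg_zero, sub_zero]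
      try ring
    have hP3 : (∑ j ∈ Finset.Ico 1 J, ∑ k ∈ Finset.Ico 1 K,
        (lam:ℂ) * psi1 (W j k) (V j k) * conj (D j k)).re
        = (lam/4) * ((∑ j ∈ Finset.Ico 1 J, ∑ k ∈ Finset.Ico 1 K,
            ‖W j k‖ ^ 4)
          - ∑ j ∈ Finset.Ico 1 J, ∑ k ∈ Finset.Ico 1 K, ‖V j k‖ ^ 4) := by
      simp only [Complex.re_sum]
      rw [← dsum_helper]
      refine Finset.sum_congr rfl fun j _ => Finset.sum_congr rfl fun k _ => ?_
      rw [show D j k = W j k - V j k from rfl, aux_re2 lam (W j k) (V j k)]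
      ring
    have hP4 : (∑ j ∈ Finset.Ico 1 J, ∑ k ∈ Finset.Ico 1 K,
        (ν:ℂ) * psi2 (W j k) (V j k) * conj (D j k)).re
        = (ν/6) * ((∑ j ∈ Finset.Ico 1 J, ∑ k ∈ Finset.Ico 1 K,
            ‖W j k‖ ^ 6)
          - ∑ j ∈ Finset.Ico 1 J, ∑ k ∈ Finset.Ico 1 K, ‖V j k‖ ^ 6) := by
      simp only [Complex.re_sum]
      rw [← dsum_helper]
      refine Finset.sum_congr rfl fun j _ => Finset.sum_congr rfl fun k _ => ?_
      rw [show D j k = W j k - V j k from rfl, aux_re3 ν (W j k) (V j k)]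
      ring
    rw [hP1, hP2, hP3, hP4] at hm
    -- rewrite gradSq, normP in terms of the sums appearing in hm
    have habs : ∀ (z : ℂ) (c : ℝ), 0 < c → ‖z/(c:ℂ)‖^2 = Complex.normSq z / c^2 := by
      intro z c hc
      rw [norm_div, Complex.norm_real, Real.norm_eq_abs, abs_of_pos hc, div_pow, Complex.sq_norm]
    have hgrad : ∀ u : ℕ → ℕ → ℂ, gradSq Δx Δy J K u
        = Δx * Δy * ((∑ j ∈ Finset.range J, ∑ k ∈ Finset.range K,
            Complex.normSq (u (j+1) k - u j k)) * (1/Δx^2)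
          + (∑ j ∈ Finset.range J, ∑ k ∈ Finset.range K,
            Complex.normSq (u j (k+1) - u j k)) * (1/Δy^2)) := by
      intro u
      rw [gradSq, ← dsum_helper2]
      congr 1
      refine Finset.sum_congr rfl fun j _ => Finset.sum_congr rfl fun k _ => ?_
      rw [habs _ _ hΔx, habs _ _ hΔy]
      ring
    have hnp : ∀ (p : ℕ), p ≠ 0 → ∀ (u : ℕ → ℕ → ℂ), memX J K u → normP Δx Δy J K p u
        = Δx * Δy * ∑ j ∈ Finset.Ico 1 J, ∑ k ∈ Finset.Ico 1 K, ‖u j k‖ ^ p := by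
      intro p hp u hu
      rw [normP, interior_sum J K (by omega) (by omega) u hu (fun z => ‖z‖ ^ p)
        (by simp [zero_pow hp])]
    rw [energy, energy, hgrad W, hgrad V, hnp 4 (by norm_num) W hWX, hnp 4 (by norm_num) V hVX, hnp 6 (by norm_num) W hWX, hnp 6 (by norm_num) V hVX]
    linear_combination (-2*Δx*Δy) * hm

/-- with `ε = 0` the CNFD scheme conserves the discrete mass and energy. -/
theorem stmt11 (J K : ℕ) (hJ : 2 ≤ J) (hK : 2 ≤ K) (a b c d : ℝ) (hab : a < b) (hcd : c < d)
    (Δx Δy : ℝ) (hΔx : Δx = (b - a) / J) (hΔy : Δy = (d - c) / K)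
    (lam ν τ : ℝ) (hν : 0 < ν) (hτ : 0 < τ)
    (N : ℕ) (U : ℕ → ℕ → ℕ → ℂ) (hU : isCNFD Δx Δy J K lam ν 0 τ N U)
    (n : ℕ) (hn : n ≤ N) :
    normP Δx Δy J K 2 (U n) = normP Δx Δy J K 2 (U 0) ∧
      energy Δx Δy J K lam ν (U n) = energy Δx Δy J K lam ν (U 0) := by
  have hΔx0 : 0 < Δx := by
    rw [hΔx]
    have hJ0 : (0:ℝ) < J := by exact_mod_cast (by omega : 0 < J)
    exact div_pos (by linarith) hJ0
  have hΔy0 : 0 < Δy := by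
    rw [hΔy]
    have hK0 : (0:ℝ) < K := by exact_mod_cast (by omega : 0 < K)
    exact div_pos (by linarith) hK0
  induction n with
  | zero => exact ⟨rfl, rfl⟩
  | succ n ih =>
    have hn' : n ≤ N := by omega
    obtain ⟨ih1, ih2⟩ := ih hn'
    have hstep := step_conserve Δx Δy hΔx0 hΔy0 J K hJ hK lam ν τ hτ (U (n+1)) (U n)
      (hU.1 (n+1) hn) (hU.1 n hn') (hU.2 n (by omega))
    exact ⟨hstep.1.trans ih1, hstep.2.trans ih2⟩
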